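/- arXiv:2104.13577 — 4 statements merged into one kernel-verified Lean document; each statement's English description precedes it below -/
import Mathlib

section
/- Let ω > 0, γ > 0, 0 < μ < 2, and let (α, β) satisfy α > 0, β ≥ 0, 2α − 3β ≥ 0 (with d = 3, p = 3). If f ∈ H¹(ℝ³) satisfies K^{α,β}_{ω,γ}(f) ≥ 0, then 2(α − β) S_{ω,γ}(f) ≤ (α − β) ‖f‖²_{H¹_{ω,γ}} ≤ (4α − 3β) S_{ω,γ}(f), where ‖f‖²_{H¹_{ω,γ}} := ω‖f‖²_{L²} + ‖∇f‖²_{L²} + ∫ γ|x|^{-μ}|f|² dx. -/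
open MeasureTheory

noncomputable section

abbrev E3 : Type := EuclideanSpace ℝ (Fin 3)

/-- `‖f‖_{L²}²` -/
def massI (f : E3 → ℂ) : ℝ := ∫ x : E3, ‖f x‖ ^ 2

/-- `‖∇f‖_{L²}²` -/
def gradI (f : E3 → ℂ) : ℝ := ∫ x : E3, ‖fderiv ℝ f x‖ ^ 2

/-- `∫ γ |x|^{-μ} |f|²` -/
def potI (γ μ : ℝ) (f : E3 → ℂ) : ℝ := ∫ x : E3, γ / ‖x‖ ^ μ * ‖f x‖ ^ 2

/-- `‖f‖_{L⁴}⁴` -/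
def l4I (f : E3 → ℂ) : ℝ := ∫ x : E3, ‖f x‖ ^ 4

/-- The action `S_{ω,γ}(f) = (ω/2)M + (1/2)‖∇f‖² + (1/2)∫γ|x|^{-μ}|f|² − (1/4)‖f‖⁴_{L⁴}`. -/
def actionS (ω γ μ : ℝ) (f : E3 → ℂ) : ℝ :=
  ω / 2 * massI f + 1 / 2 * gradI f + 1 / 2 * potI γ μ f - 1 / 4 * l4I f

/-- `K^{α,β}_{ω,γ}(f) = (d/dλ)|_{λ=0} S_{ω,γ}(e^{αλ} f(e^{βλ}·))`, computed explicitly from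
the scaling of each term of the action (`d = p = 3`). -/
def funcK (ω γ μ α β : ℝ) (f : E3 → ℂ) : ℝ :=
  ω * (2 * α - 3 * β) / 2 * massI f + (2 * α - β) / 2 * gradI f
    + (2 * α - (3 - μ) * β) / 2 * potI γ μ f - (4 * α - 3 * β) / 4 * l4I f

/-- membership in `H¹(ℝ³)` -/
def MemH1 (f : E3 → ℂ) : Prop :=
  MemLp f 2 volume ∧ MemLp (fun x => fderiv ℝ f x) 2 volume

/-- radial symmetry -/
def IsRadial (f : E3 → ℂ) : Prop := ∀ x y : E3, ‖x‖ = ‖y‖ → f x = f y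

/-- The `H¹_{ω,γ}` norm squared: `ω‖f‖²_{L²} + ‖∇f‖²_{L²} + ∫γ|x|^{-μ}|f|²`. -/
def h1NormSq (ω γ μ : ℝ) (f : E3 → ℂ) : ℝ := ω * massI f + gradI f + potI γ μ f

/-- equivalence of the `H¹_{ω,γ}`-norm and the action `S_{ω,γ}` under
`K^{α,β}_{ω,γ}(f) ≥ 0`. -/
theorem h1_action_equivalence (ω γ μ α β : ℝ)
    (hω : 0 < ω) (hγ : 0 < γ) (hμ : 0 < μ) (hμ2 : μ < 2)
    (hα : 0 < α) (hβ : 0 ≤ β) (hαβ : 0 ≤ 2 * α - 3 * β)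
    (f : E3 → ℂ) (hf : MemH1 f)
    (hK : 0 ≤ funcK ω γ μ α β f) :
    2 * (α - β) * actionS ω γ μ f ≤ (α - β) * h1NormSq ω γ μ f ∧
      (α - β) * h1NormSq ω γ μ f ≤ (4 * α - 3 * β) * actionS ω γ μ f := by
  have hM : 0 ≤ massI f := integral_nonneg fun x => by positivity
  have hG : 0 ≤ gradI f := integral_nonneg fun x => by positivity
  have hP : 0 ≤ potI γ μ f := integral_nonneg fun x => by positivity
  have hL : 0 ≤ l4I f := integral_nonneg fun x => by positivity
  unfold funcK at hK
  unfold actionS h1NormSq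
  constructor
  · nlinarith [mul_nonneg hω.le hM, mul_nonneg (mul_nonneg hω.le hM) hβ, mul_nonneg hP hβ, mul_nonneg hL hβ]
  · nlinarith [mul_nonneg (mul_nonneg hω.le hM) hβ, mul_nonneg hP hβ, mul_nonneg (mul_nonneg hμ.le hP) hβ]

end
end

section
/- Let H be a Hilbert space, {f_n} a bounded sequence in H, {t_n¹}, {t_n²} ⊂ ℝ, and let U(t) be a strongly continuous unitary group on H. Suppose U(t_n¹) f_n ⇀ f¹ weakly in H, and set R_n := f_n − U(−t_n¹) f¹. If t_n² − t_n¹ → τ ∈ ℝ and U(t_n²) R_n ⇀ f² weakly in H, then f² = 0. -/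
open scoped InnerProductSpace

/-- orthogonality of time parameters in the linear profile decomposition.
If `U` is a strongly continuous unitary group on a Hilbert space `H`,
`U(t_n¹) f_n ⇀ f¹`, `R_n = f_n − U(−t_n¹) f¹`, the relative time shifts converge
`t_n² − t_n¹ → τ`, and `U(t_n²) R_n ⇀ f²`, then `f² = 0`. -/
theorem profile_time_orthogonality
    {H : Type*} [NormedAddCommGroup H] [InnerProductSpace ℂ H] [CompleteSpace H]
    (U : ℝ → H ≃ₗᵢ[ℂ] H)
    (hgroup : ∀ s t : ℝ, ∀ x : H, U (s + t) x = U s (U t x))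
    (hcont : ∀ x : H, Continuous fun t => U t x)
    (f : ℕ → H) (C : ℝ) (hbdd : ∀ n, ‖f n‖ ≤ C)
    (t1 t2 : ℕ → ℝ) (f1 f2 : H) (τ : ℝ)
    (hweak1 : ∀ g : H, Filter.Tendsto (fun n => ⟪U (t1 n) (f n), g⟫_ℂ)
      Filter.atTop (nhds ⟪f1, g⟫_ℂ))
    (R : ℕ → H) (hR : ∀ n, R n = f n - U (-(t1 n)) f1)
    (hτ : Filter.Tendsto (fun n => t2 n - t1 n) Filter.atTop (nhds τ))
    (hweak2 : ∀ g : H, Filter.Tendsto (fun n => ⟪U (t2 n) (R n), g⟫_ℂ)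
      Filter.atTop (nhds ⟪f2, g⟫_ℂ)) :
    f2 = 0 := by
  -- U 0 = id
  have hU0 : ∀ x : H, U 0 x = x := by
    intro x
    have h := hgroup 0 0 x
    simp only [add_zero] at h
    exact ((U 0).injective h.symm)
  have hinv : ∀ s : ℝ, ∀ x : H, U s (U (-s) x) = x := by
    intro s x
    rw [← hgroup]
    simp [hU0]
  -- adjoint formula
  have hadj : ∀ s : ℝ, ∀ x g : H, ⟪U s x, g⟫_ℂ = ⟪x, U (-s) g⟫_ℂ := by
    intro s x g
    conv_lhs => rw [← hinv s g]
    exact (U s).inner_map_map x (U (-s) g)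
  set x : ℕ → H := fun n => U (t1 n) (f n) - f1 with hxdef
  have hx : ∀ g : H, Filter.Tendsto (fun n => ⟪x n, g⟫_ℂ) Filter.atTop (nhds 0) := by
    intro g
    have := (hweak1 g).sub_const ⟪f1, g⟫_ℂ
    simpa [hxdef, inner_sub_left] using this
  have hbx : ∀ n, ‖x n‖ ≤ C + ‖f1‖ := by
    intro n
    calc ‖x n‖ ≤ ‖U (t1 n) (f n)‖ + ‖f1‖ := norm_sub_le _ _
    _ ≤ C + ‖f1‖ := by rw [(U (t1 n)).norm_map]; exact add_le_add (hbdd n) le_rfl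
  -- rewrite U(t2 n) (R n)
  have hkey : ∀ n, U (t2 n) (R n) = U (t2 n - t1 n) (x n) := by
    intro n
    have h1 : U (t1 n) (R n) = x n := by
      rw [hR, map_sub, hinv]
    rw [← h1, ← hgroup, sub_add_cancel]
  -- show the inner products tend to 0
  have hzero : ∀ g : H,
      Filter.Tendsto (fun n => ⟪U (t2 n) (R n), g⟫_ℂ) Filter.atTop (nhds 0) := by
    intro g
    have heq : ∀ n, ⟪U (t2 n) (R n), g⟫_ℂ
        = ⟪x n, U (-τ) g⟫_ℂ + ⟪x n, U (-(t2 n - t1 n)) g - U (-τ) g⟫_ℂ := by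
      intro n
      rw [hkey, hadj, inner_sub_right]
      ring
    simp only [heq]
    have h1 := hx (U (-τ) g)
    have h2 : Filter.Tendsto (fun n => ⟪x n, U (-(t2 n - t1 n)) g - U (-τ) g⟫_ℂ)
        Filter.atTop (nhds 0) := by
      have hnorm : Filter.Tendsto (fun n => ‖U (-(t2 n - t1 n)) g - U (-τ) g‖)
          Filter.atTop (nhds 0) := by
        have hc : Filter.Tendsto (fun n => U (-(t2 n - t1 n)) g) Filter.atTop
            (nhds (U (-τ) g)) := ((hcont g).tendsto (-τ)).comp hτ.neg
        have := hc.sub_const (U (-τ) g)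
        simpa using this.norm
      have hb : ∀ n, ‖⟪x n, U (-(t2 n - t1 n)) g - U (-τ) g⟫_ℂ‖
          ≤ (C + ‖f1‖) * ‖U (-(t2 n - t1 n)) g - U (-τ) g‖ := fun n =>
        calc ‖⟪x n, U (-(t2 n - t1 n)) g - U (-τ) g⟫_ℂ‖
            ≤ ‖x n‖ * ‖U (-(t2 n - t1 n)) g - U (-τ) g‖ := norm_inner_le_norm _ _
          _ ≤ (C + ‖f1‖) * ‖U (-(t2 n - t1 n)) g - U (-τ) g‖ :=
            mul_le_mul_of_nonneg_right (hbx n) (norm_nonneg _)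
      exact squeeze_zero_norm hb (by simpa using hnorm.const_mul (C + ‖f1‖))
    simpa using h1.add h2
  have : ⟪f2, f2⟫_ℂ = 0 :=
    tendsto_nhds_unique (hweak2 f2) (hzero f2)
  exact inner_self_eq_zero.mp this
end

section
/- Let d = p = 3, γ > 0, 0 < μ < 2, ω > 0, J ∈ ℕ, and let r denote the radial ground-state action level r_{ω,γ} = S_{ω,γ}(Q_{ω,γ}). Suppose {f^j}_{j=1}^J ⊂ H¹_rad(ℝ³) \ {0}, δ > 0, ε > 0 with 2ε < δ satisfy: Σ_{j=1}^J S_{ω,γ}(f^j) − ε ≤ S_{ω,γ}(Σ_{j=1}^J f^j) ≤ r − δ and −ε ≤ N_{ω,γ}(Σ_{j=1}^J f^j) ≤ Σ_{j=1}^J N_{ω,γ}(f^j) + ε. Then for each 1 ≤ j ≤ J: 0 < S_{ω,γ}(f^j) < r and N_{ω,γ}(f^j) > 0. -/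
open MeasureTheory

noncomputable section

/-- The Nehari functional `N_{ω,γ}(f) = ω‖f‖² + ‖∇f‖² + ∫γ|x|^{-μ}|f|² − ‖f‖⁴_{L⁴}`. -/
def nehariN (ω γ μ : ℝ) (f : E3 → ℂ) : ℝ := ω * massI f + gradI f + potI γ μ f - l4I f

/-- profiles almost decoupling the action and Nehari functional below the
radial ground-state level `r` are each below the ground state with positive Nehari
functional. -/
theorem profiles_below_ground_state (ω γ μ : ℝ)
    (hω : 0 < ω) (hγ : 0 < γ) (hμ : 0 < μ) (hμ2 : μ < 2)
    (r : ℝ)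
    (hr : ∀ g : E3 → ℂ, MemH1 g → IsRadial g → ¬ (g =ᵐ[volume] 0) →
      nehariN ω γ μ g ≤ 0 → r ≤ actionS ω γ μ g - nehariN ω γ μ g / 2)
    (J : ℕ) (hJ : 1 ≤ J) (f : Fin J → E3 → ℂ)
    (hmem : ∀ j, MemH1 (f j)) (hrad : ∀ j, IsRadial (f j))
    (hne : ∀ j, ¬ (f j =ᵐ[volume] 0))
    (δ ε : ℝ) (hδ : 0 < δ) (hε : 0 < ε) (hεδ : 2 * ε < δ)
    (hS1 : (∑ j, actionS ω γ μ (f j)) - ε ≤ actionS ω γ μ (fun x => ∑ j, f j x))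
    (hS2 : actionS ω γ μ (fun x => ∑ j, f j x) ≤ r - δ)
    (hN1 : -ε ≤ nehariN ω γ μ (fun x => ∑ j, f j x))
    (hN2 : nehariN ω γ μ (fun x => ∑ j, f j x) ≤ (∑ j, nehariN ω γ μ (f j)) + ε) :
    ∀ j, 0 < actionS ω γ μ (f j) ∧ actionS ω γ μ (f j) < r ∧ 0 < nehariN ω γ μ (f j) := by
  -- `S(g) = N(g)/2 + L(g)/4` where `L = l4I` is nonnegative.
  have key : ∀ g : E3 → ℂ, actionS ω γ μ g = nehariN ω γ μ g / 2 + l4I g / 4 := by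
    intro g; unfold actionS nehariN; ring
  have hl4 : ∀ g : E3 → ℂ, 0 ≤ l4I g := fun g =>
    integral_nonneg fun x => by positivity
  -- sum identity
  have hsum : ∑ j, actionS ω γ μ (f j)
      = (∑ j, nehariN ω γ μ (f j)) / 2 + (∑ j, l4I (f j)) / 4 := by
    rw [Finset.sum_congr rfl fun j _ => key (f j), Finset.sum_add_distrib,
      ← Finset.sum_div, ← Finset.sum_div]
  -- the total `L`-sum is strictly below `4r`
  have hLsum : (∑ j, l4I (f j)) / 4 < r := by
    have h1 : (∑ j, l4I (f j)) / 4
        = (∑ j, actionS ω γ μ (f j)) - (∑ j, nehariN ω γ μ (f j)) / 2 := by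
      rw [hsum]; ring
    linarith
  -- each Nehari functional is positive
  have hNpos : ∀ k, 0 < nehariN ω γ μ (f k) := by
    intro k
    by_contra h
    push_neg at h
    have hrk := hr (f k) (hmem k) (hrad k) (hne k) h
    rw [key (f k)] at hrk
    have hle : l4I (f k) / 4 ≤ (∑ j, l4I (f j)) / 4 := by
      apply div_le_div_of_nonneg_right ?_ (by norm_num)
      exact Finset.single_le_sum (fun j _ => hl4 (f j)) (Finset.mem_univ k)
    linarith
  -- each action is positive
  have hSpos : ∀ k, 0 < actionS ω γ μ (f k) := by
    intro k
    rw [key (f k)]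
    have := hNpos k
    have := hl4 (f k)
    linarith
  intro j
  refine ⟨hSpos j, ?_, hNpos j⟩
  have hle : actionS ω γ μ (f j) ≤ ∑ k, actionS ω γ μ (f k) :=
    Finset.single_le_sum (fun k _ => (hSpos k).le) (Finset.mem_univ j)
  linarith


end
end

section
/- Let d = p = 3, γ > 0, 0 < μ < 2, ω > 0, and let (α,β) and (α',β') both satisfy the conditions a > 0, b ≥ 0, 2a − 3b > 0. Then the sets R^{α,β,+} := {φ ∈ H¹_rad(ℝ³) : S_{ω,γ}(φ) < r_{ω,γ}, K^{α,β}_{ω,γ}(φ) ≥ 0} coincide: R^{α,β,+} = R^{α',β',+}, and similarly the sets with K^{α,β}_{ω,γ}(φ) < 0 coincide. -/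
open MeasureTheory

noncomputable section

/-- `R^{α,β,+}_{ω,γ}`: radial functions below the level `r` with nonnegative `K^{α,β}`. -/
def setRplus (ω γ μ α β r : ℝ) : Set (E3 → ℂ) :=
  {φ | MemH1 φ ∧ IsRadial φ ∧ actionS ω γ μ φ < r ∧ 0 ≤ funcK ω γ μ α β φ}

/-- `R^{α,β,−}_{ω,γ}`: radial functions below the level `r` with negative `K^{α,β}`. -/
def setRminus (ω γ μ α β r : ℝ) : Set (E3 → ℂ) :=
  {φ | MemH1 φ ∧ IsRadial φ ∧ actionS ω γ μ φ < r ∧ funcK ω γ μ α β φ < 0}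

lemma massI_nonneg (f : E3 → ℂ) : 0 ≤ massI f :=
  integral_nonneg fun x => by positivity

lemma gradI_nonneg (f : E3 → ℂ) : 0 ≤ gradI f :=
  integral_nonneg fun x => by positivity

lemma potI_nonneg {γ : ℝ} (hγ : 0 ≤ γ) (μ : ℝ) (f : E3 → ℂ) : 0 ≤ potI γ μ f :=
  integral_nonneg fun x =>
    mul_nonneg (div_nonneg hγ (Real.rpow_nonneg (norm_nonneg x) μ)) (by positivity)

lemma l4I_nonneg (f : E3 → ℂ) : 0 ≤ l4I f :=
  integral_nonneg fun x => by positivity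

lemma massI_zero {f : E3 → ℂ} (h : f =ᵐ[volume] 0) : massI f = 0 := by
  unfold massI
  rw [show (0:ℝ) = ∫ _ : E3, (0:ℝ) by simp]
  exact integral_congr_ae (h.mono fun x hx => by simp [hx])

lemma potI_zero (γ μ : ℝ) {f : E3 → ℂ} (h : f =ᵐ[volume] 0) : potI γ μ f = 0 := by
  unfold potI
  rw [show (0:ℝ) = ∫ _ : E3, (0:ℝ) by simp]
  exact integral_congr_ae (h.mono fun x hx => by simp [hx])

lemma l4I_zero {f : E3 → ℂ} (h : f =ᵐ[volume] 0) : l4I f = 0 := by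
  unfold l4I
  rw [show (0:ℝ) = ∫ _ : E3, (0:ℝ) by simp]
  exact integral_congr_ae (h.mono fun x hx => by simp [hx])

/-- Algebraic key: on the constraint set `K^{a,b} = 0` (for admissible `(a,b)`),
the action is nonnegative, since `(4a-3b)·S = K + ωa·M + (a-b)·G + ((2a-μb)/2)·P`. -/
lemma actionS_nonneg_of_K_zero (ω γ μ : ℝ) (hω : 0 < ω) (hγ : 0 < γ) (hμ2 : μ < 2)
    (a b : ℝ) (ha : 0 < a) (hb : 0 ≤ b) (hab : 0 < 2 * a - 3 * b)
    (g : E3 → ℂ) (hK : funcK ω γ μ a b g = 0) : 0 ≤ actionS ω γ μ g := by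
  have hM := massI_nonneg g
  have hG := gradI_nonneg g
  have hP := potI_nonneg hγ.le μ g
  unfold funcK at hK
  unfold actionS
  nlinarith [mul_nonneg (mul_nonneg hω.le ha.le) hM,
    mul_nonneg (show (0:ℝ) ≤ a - b by linarith) hG,
    mul_nonneg (show (0:ℝ) ≤ 2 * a - μ * b by nlinarith) hP, hab]

/-- `funcK` is affine (indeed linear) in the parameters `(α,β)`. -/
lemma funcK_comb (ω γ μ α β α' β' t : ℝ) (f : E3 → ℂ) :
    funcK ω γ μ ((1 - t) * α + t * α') ((1 - t) * β + t * β') f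
      = (1 - t) * funcK ω γ μ α β f + t * funcK ω γ μ α' β' f := by
  unfold funcK; ring

lemma setRplus_subset (ω γ μ : ℝ)
    (hω : 0 < ω) (hγ : 0 < γ) (hμ2 : μ < 2) (r : ℝ)
    (hrinf : ∀ a b : ℝ, 0 < a → 0 ≤ b → 0 < 2 * a - 3 * b →
      r = sInf {s : ℝ | ∃ g : E3 → ℂ, MemH1 g ∧ IsRadial g ∧ ¬ (g =ᵐ[volume] 0) ∧
        funcK ω γ μ a b g = 0 ∧ s = actionS ω γ μ g})
    (α β α' β' : ℝ)
    (hα : 0 < α) (hβ : 0 ≤ β) (hαβ : 0 < 2 * α - 3 * β)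
    (hα' : 0 < α') (hβ' : 0 ≤ β') (hαβ' : 0 < 2 * α' - 3 * β') :
    setRplus ω γ μ α β r ⊆ setRplus ω γ μ α' β' r := by
  rintro φ ⟨h1, h2, h3, h4⟩
  refine ⟨h1, h2, h3, ?_⟩
  by_contra h5
  push_neg at h5
  -- φ is not a.e. zero, else K^{α',β'}(φ) = (2α'-β')/2 · gradI φ ≥ 0
  have hφ0 : ¬ (φ =ᵐ[volume] 0) := by
    intro h0
    have hG := gradI_nonneg φ
    unfold funcK at h5
    rw [massI_zero h0, potI_zero γ μ h0, l4I_zero h0] at h5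
    nlinarith [mul_nonneg (show (0:ℝ) ≤ 2 * α' - β' by linarith) hG]
  set K1 := funcK ω γ μ α β φ with hK1
  set K2 := funcK ω γ μ α' β' φ with hK2
  have hd : 0 < K1 - K2 := by linarith
  set t := K1 / (K1 - K2) with ht
  have ht0 : 0 ≤ t := div_nonneg h4 hd.le
  have ht1 : t < 1 := (div_lt_one hd).2 (by linarith)
  have ht1' : 0 < 1 - t := by linarith
  set a := (1 - t) * α + t * α' with hadef
  set b := (1 - t) * β + t * β' with hbdef
  have ha : 0 < a := by
    have := mul_pos ht1' hα
    nlinarith [mul_nonneg ht0 hα'.le]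
  have hbb : 0 ≤ b := by
    have := mul_nonneg ht1'.le hβ
    nlinarith [mul_nonneg ht0 hβ']
  have hab2 : 0 < 2 * a - 3 * b := by
    nlinarith [mul_pos ht1' hαβ, mul_nonneg ht0 hαβ'.le]
  have hKt : funcK ω γ μ a b φ = 0 := by
    rw [hadef, hbdef, funcK_comb, ← hK1, ← hK2, ht]
    field_simp
    ring
  have hr := hrinf a b ha hbb hab2
  have hmem : actionS ω γ μ φ ∈ {s : ℝ | ∃ g : E3 → ℂ, MemH1 g ∧ IsRadial g ∧
      ¬ (g =ᵐ[volume] 0) ∧ funcK ω γ μ a b g = 0 ∧ s = actionS ω γ μ g} :=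
    ⟨φ, h1, h2, hφ0, hKt, rfl⟩
  have hbdd : BddBelow {s : ℝ | ∃ g : E3 → ℂ, MemH1 g ∧ IsRadial g ∧
      ¬ (g =ᵐ[volume] 0) ∧ funcK ω γ μ a b g = 0 ∧ s = actionS ω γ μ g} := by
    refine ⟨0, fun s hs => ?_⟩
    obtain ⟨g, _, _, _, hg4, hg5⟩ := hs
    rw [hg5]
    exact actionS_nonneg_of_K_zero ω γ μ hω hγ hμ2 a b ha hbb hab2 g hg4
  have : r ≤ actionS ω γ μ φ := hr ▸ csInf_le hbdd hmem
  linarith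

/-- the splitting of the region below the radial ground-state level `r` by the
sign of `K^{α,β}_{ω,γ}` is independent of the parameters `(α,β)` with `α > 0`, `β ≥ 0`,
`2α − 3β > 0`.  Here `r` is the common minimization level
`r = inf {S_{ω,γ}(f) : f ∈ H¹_rad \ {0}, K^{α,β}_{ω,γ}(f) = 0}`, assumed independent of
`(α,β)` and attained by a radial ground state. -/
theorem splitting_parameter_independence (ω γ μ : ℝ)
    (hω : 0 < ω) (hγ : 0 < γ) (hμ : 0 < μ) (hμ2 : μ < 2)
    (r : ℝ)
    (hrinf : ∀ a b : ℝ, 0 < a → 0 ≤ b → 0 < 2 * a - 3 * b →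
      r = sInf {s : ℝ | ∃ g : E3 → ℂ, MemH1 g ∧ IsRadial g ∧ ¬ (g =ᵐ[volume] 0) ∧
        funcK ω γ μ a b g = 0 ∧ s = actionS ω γ μ g})
    (hratt : ∀ a b : ℝ, 0 < a → 0 ≤ b → 0 < 2 * a - 3 * b →
      ∃ Q : E3 → ℂ, MemH1 Q ∧ IsRadial Q ∧ ¬ (Q =ᵐ[volume] 0) ∧
        funcK ω γ μ a b Q = 0 ∧ actionS ω γ μ Q = r)
    (α β α' β' : ℝ)
    (hα : 0 < α) (hβ : 0 ≤ β) (hαβ : 0 < 2 * α - 3 * β)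
    (hα' : 0 < α') (hβ' : 0 ≤ β') (hαβ' : 0 < 2 * α' - 3 * β') :
    setRplus ω γ μ α β r = setRplus ω γ μ α' β' r ∧
      setRminus ω γ μ α β r = setRminus ω γ μ α' β' r := by
  have hplus : setRplus ω γ μ α β r = setRplus ω γ μ α' β' r :=
    Set.Subset.antisymm
      (setRplus_subset ω γ μ hω hγ hμ2 r hrinf α β α' β' hα hβ hαβ hα' hβ' hαβ')
      (setRplus_subset ω γ μ hω hγ hμ2 r hrinf α' β' α β hα' hβ' hαβ' hα hβ hαβ)
  refine ⟨hplus, ?_⟩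
  ext φ
  constructor
  · rintro ⟨h1, h2, h3, h4⟩
    refine ⟨h1, h2, h3, ?_⟩
    by_contra h5
    push_neg at h5
    have : φ ∈ setRplus ω γ μ α β r := hplus ▸ (⟨h1, h2, h3, h5⟩ :
      φ ∈ setRplus ω γ μ α' β' r)
    exact absurd this.2.2.2 (not_le.2 h4)
  · rintro ⟨h1, h2, h3, h4⟩
    refine ⟨h1, h2, h3, ?_⟩
    by_contra h5
    push_neg at h5
    have : φ ∈ setRplus ω γ μ α' β' r := hplus ▸ (⟨h1, h2, h3, h5⟩ :
      φ ∈ setRplus ω γ μ α β r)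
    exact absurd this.2.2.2 (not_le.2 h4)

end
end
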